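/- Let ℓ > 2 be an integer and let μ be a partition that has a vertical (resp. horizontal) ℓ-rim hook R such that the partition μ∖R has a horizontal (resp. vertical) ℓ-rim hook S adjacent to R. Then μ is not an (ℓ,0)-JM partition. -/

import Mathlib

/-- Hook length of the box in row `a`, column `b` (0-indexed) of a Young diagram:
the number of boxes `(a, b')` with `b' ≥ b` plus the number of boxes `(a', b)` with `a' > a`. -/
def YoungDiagram.hook (μ : YoungDiagram) (a b : ℕ) : ℕ :=
  (μ.rowLen a - b) + (μ.colLen b - (a + 1))

/-- `μ` is an `(ℓ,0)`-JM partition: there do not exist boxes `(a,b)`, `(a,y)`, `(x,b)` of `μ`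
with `ℓ ∣ h_{(a,b)}`, `ℓ ∤ h_{(a,y)}` and `ℓ ∤ h_{(x,b)}`. -/
def IsJM (ℓ : ℕ) (μ : YoungDiagram) : Prop :=
  ¬ ∃ a b y x : ℕ, (a, b) ∈ μ ∧ (a, y) ∈ μ ∧ (x, b) ∈ μ ∧
      ℓ ∣ μ.hook a b ∧ ¬ ℓ ∣ μ.hook a y ∧ ¬ ℓ ∣ μ.hook x b


/-- Two boxes are adjacent if they share an edge. -/
def CellAdj (u v : ℕ × ℕ) : Prop :=
  (u.1 = v.1 ∧ (u.2 + 1 = v.2 ∨ v.2 + 1 = u.2)) ∨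
  (u.2 = v.2 ∧ (u.1 + 1 = v.1 ∨ v.1 + 1 = u.1))

/-- A set of boxes is connected if any two of its boxes are joined by a chain of boxes of the
set, successive boxes sharing an edge. -/
def ConnectedSet (R : Finset (ℕ × ℕ)) : Prop :=
  ∀ u ∈ R, ∀ v ∈ R,
    Relation.ReflTransGen (fun x y : ℕ × ℕ => x ∈ R ∧ y ∈ R ∧ CellAdj x y) u v

/-- A set of boxes contains no 2×2 square. -/
def NoSquare (R : Finset (ℕ × ℕ)) : Prop :=
  ¬ ∃ i j : ℕ, (i, j) ∈ R ∧ (i + 1, j) ∈ R ∧ (i, j + 1) ∈ R ∧ (i + 1, j + 1) ∈ R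

/-- `R` is an `ℓ`-rim hook of `μ`: a connected set of `ℓ` boxes of `μ` with no 2×2 square,
whose removal from `μ` leaves the Young diagram of a partition. -/
def IsRimHook (ℓ : ℕ) (μ : YoungDiagram) (R : Finset (ℕ × ℕ)) : Prop :=
  R ⊆ μ.cells ∧ R.card = ℓ ∧ (∃ ν : YoungDiagram, ν.cells = μ.cells \ R) ∧
    ConnectedSet R ∧ NoSquare R

/-- A set of boxes all lying in one row. -/
def Horizontal (R : Finset (ℕ × ℕ)) : Prop := ∃ r : ℕ, ∀ c ∈ R, c.1 = r

/-- A set of boxes all lying in one column. -/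
def Vertical (R : Finset (ℕ × ℕ)) : Prop := ∃ r : ℕ, ∀ c ∈ R, c.2 = r

/-- Two sets of boxes are adjacent if some box of one shares an edge with some box of the
other. -/
def AdjSets (R S : Finset (ℕ × ℕ)) : Prop := ∃ u ∈ R, ∃ v ∈ S, CellAdj u v

open YoungDiagram

section Aux

lemma colLen_eq_of {μ ν : YoungDiagram} {j : ℕ} (h : ∀ i, (i,j) ∈ μ ↔ (i,j) ∈ ν) :
    μ.colLen j = ν.colLen j := by
  rcases Nat.lt_trichotomy (μ.colLen j) (ν.colLen j) with hlt | heq | hgt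
  · have := mem_iff_lt_colLen.mp ((h _).mpr (mem_iff_lt_colLen.mpr hlt)); omega
  · exact heq
  · have := mem_iff_lt_colLen.mp ((h _).mp (mem_iff_lt_colLen.mpr hgt)); omega

lemma rowLen_eq_of {μ ν : YoungDiagram} {i : ℕ} (h : ∀ j, (i,j) ∈ μ ↔ (i,j) ∈ ν) :
    μ.rowLen i = ν.rowLen i := by
  rcases Nat.lt_trichotomy (μ.rowLen i) (ν.rowLen i) with hlt | heq | hgt
  · have := mem_iff_lt_rowLen.mp ((h _).mpr (mem_iff_lt_rowLen.mpr hlt)); omega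
  · exact heq
  · have := mem_iff_lt_rowLen.mp ((h _).mp (mem_iff_lt_rowLen.mpr hgt)); omega

lemma vstruct (ℓ : ℕ) (hℓ : 0 < ℓ) (μ : YoungDiagram) (R : Finset (ℕ×ℕ))
    (hR : IsRimHook ℓ μ R) (c : ℕ) (hc : ∀ p ∈ R, p.2 = c) :
    ∃ a, μ.colLen c = a + ℓ ∧ (∀ p, p ∈ R ↔ p.2 = c ∧ a ≤ p.1 ∧ p.1 < a + ℓ) ∧
      (∀ x, a ≤ x → x < a + ℓ → μ.rowLen x = c + 1) := by
  obtain ⟨hsub, hcard, ⟨ν, hν⟩, -, -⟩ := hR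
  have hmemν : ∀ p : ℕ × ℕ, p ∈ ν ↔ p ∈ μ ∧ p ∉ R := by
    intro p; rw [← mem_cells, hν, Finset.mem_sdiff, mem_cells]
  have hne : R.Nonempty := Finset.card_pos.mp (by omega)
  obtain ⟨m, hmR, hmin⟩ := Finset.exists_min_image R Prod.fst hne
  set a := m.1 with ha
  have hmc : m = (a, c) := Prod.ext rfl (hc m hmR)
  rw [hmc] at hmR
  have hup : ∀ x, (x, c) ∈ R → (x+1, c) ∈ μ → (x+1, c) ∈ R := by
    intro x hx hx1
    by_contra hnot
    have h1 : (x+1, c) ∈ ν := (hmemν _).mpr ⟨hx1, hnot⟩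
    have h0 : (x, c) ∈ ν := ν.isLowerSet (Prod.mk_le_mk.mpr ⟨by omega, le_rfl⟩) h1
    exact ((hmemν _).mp h0).2 hx
  have hall : ∀ x, a ≤ x → x < μ.colLen c → (x, c) ∈ R := by
    intro x hax
    induction x, hax using Nat.le_induction with
    | base => intro _; exact hmR
    | succ n hn ih =>
      intro h
      exact hup n (ih (by omega)) (mem_iff_lt_colLen.mpr h)
  have hRe : R = (Finset.Ico a (μ.colLen c)).image (fun x => (x, c)) := by
    ext p
    simp only [Finset.mem_image, Finset.mem_Ico]
    constructor
    · intro hp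
      exact ⟨p.1, ⟨hmin p hp, mem_iff_lt_colLen.mp (by
        have := hsub hp; rw [mem_cells] at this
        rwa [show p = (p.1, c) from Prod.ext rfl (hc p hp)] at this)⟩,
        (Prod.ext rfl (hc p hp).symm)⟩
    · rintro ⟨x, ⟨h1, h2⟩, rfl⟩
      exact hall x h1 h2
  have hacol : a < μ.colLen c := by
    have := hsub hmR; rw [mem_cells] at this
    exact mem_iff_lt_colLen.mp this
  have hcardIm : R.card = μ.colLen c - a := by
    rw [hRe, Finset.card_image_of_injective _ (fun x y h => (Prod.mk.injEq _ _ _ _).mp h |>.1),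
      Nat.card_Ico]
  have hcolc : μ.colLen c = a + ℓ := by omega
  refine ⟨a, hcolc, ?_, ?_⟩
  · intro p
    rw [hRe]
    simp only [Finset.mem_image, Finset.mem_Ico]
    constructor
    · rintro ⟨x, ⟨h1, h2⟩, rfl⟩; exact ⟨rfl, h1, by omega⟩
    · rintro ⟨h2, h1, h3⟩
      exact ⟨p.1, ⟨h1, by omega⟩, Prod.ext rfl h2.symm⟩
  · intro x h1 h2
    have hxR : (x, c) ∈ R := hall x h1 (by omega)
    have hxμ : (x, c) ∈ μ := by have := hsub hxR; rwa [mem_cells] at this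
    have hlow : c < μ.rowLen x := mem_iff_lt_rowLen.mp hxμ
    have hnot : (x, c+1) ∉ μ := by
      intro hmem
      have h1' : (x, c+1) ∈ ν := (hmemν _).mpr ⟨hmem, by
        intro hR'; have := hc _ hR'; simp at this⟩
      have h0 : (x, c) ∈ ν :=
        ν.isLowerSet (Prod.mk_le_mk.mpr ⟨le_rfl, by omega⟩) h1'
      exact ((hmemν _).mp h0).2 hxR
    have := mem_iff_lt_rowLen.not.mp hnot
    omega

/-- Swap all boxes of a finset of cells. -/
def swapF (R : Finset (ℕ × ℕ)) : Finset (ℕ × ℕ) :=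
  R.map (Equiv.prodComm ℕ ℕ).toEmbedding

lemma mem_swapF {R : Finset (ℕ × ℕ)} {p : ℕ × ℕ} : p ∈ swapF R ↔ p.swap ∈ R := by
  simp [swapF, Finset.mem_map_equiv]

lemma cellAdj_swap {u v : ℕ × ℕ} (h : CellAdj u v) : CellAdj u.swap v.swap := by
  unfold CellAdj at *
  dsimp [Prod.swap] at *
  tauto

lemma isRimHook_swap {ℓ : ℕ} {μ : YoungDiagram} {R : Finset (ℕ × ℕ)}
    (h : IsRimHook ℓ μ R) : IsRimHook ℓ μ.transpose (swapF R) := by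
  obtain ⟨hsub, hcard, ⟨ν, hν⟩, hconn, hsq⟩ := h
  have hmemν : ∀ p : ℕ × ℕ, p ∈ ν ↔ p ∈ μ ∧ p ∉ R := by
    intro p; rw [← mem_cells, hν, Finset.mem_sdiff, mem_cells]
  refine ⟨?_, ?_, ⟨ν.transpose, ?_⟩, ?_, ?_⟩
  · intro p hp
    rw [mem_cells, mem_transpose]
    have := hsub (mem_swapF.mp hp); rwa [mem_cells] at this
  · rw [swapF, Finset.card_map, hcard]
  · ext p
    rw [mem_cells, mem_transpose, Finset.mem_sdiff, mem_cells, mem_transpose, mem_swapF,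
      hmemν]
  · intro u hu v hv
    have h0 := hconn u.swap (mem_swapF.mp hu) v.swap (mem_swapF.mp hv)
    have := Relation.ReflTransGen.lift
      (p := fun x y : ℕ × ℕ => x ∈ swapF R ∧ y ∈ swapF R ∧ CellAdj x y) Prod.swap
      (fun a b (hab : a ∈ R ∧ b ∈ R ∧ CellAdj a b) => ⟨mem_swapF.mpr (by simpa using hab.1),
        mem_swapF.mpr (by simpa using hab.2.1), cellAdj_swap hab.2.2⟩) _ _ h0
    simpa [Function.onFun] using this
  · rintro ⟨i, j, h1, h2, h3, h4⟩
    exact hsq ⟨j, i, mem_swapF.mp h1, mem_swapF.mp h3, mem_swapF.mp h2, mem_swapF.mp h4⟩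

lemma hook_transpose {μ : YoungDiagram} {a b : ℕ} (h : (a, b) ∈ μ) :
    μ.transpose.hook b a = μ.hook a b := by
  have h1 : b < μ.rowLen a := mem_iff_lt_rowLen.mp h
  have h2 : a < μ.colLen b := mem_iff_lt_colLen.mp h
  unfold YoungDiagram.hook
  rw [rowLen_transpose, colLen_transpose]
  omega

lemma isJM_transpose {ℓ : ℕ} {μ : YoungDiagram} (h : IsJM ℓ μ) : IsJM ℓ μ.transpose := by
  rintro ⟨a, b, y, x, h1, h2, h3, hd, hn1, hn2⟩
  rw [mem_transpose] at h1 h2 h3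
  dsimp [Prod.swap] at h1 h2 h3
  rw [hook_transpose h1] at hd
  rw [hook_transpose h2] at hn1
  rw [hook_transpose h3] at hn2
  exact h ⟨b, a, x, y, h1, h3, h2, hd, hn2, hn1⟩

lemma hstruct (ℓ : ℕ) (hℓ : 0 < ℓ) (μ : YoungDiagram) (S : Finset (ℕ×ℕ))
    (hS : IsRimHook ℓ μ S) (r : ℕ) (hr : ∀ p ∈ S, p.1 = r) :
    ∃ d, μ.rowLen r = d + ℓ ∧ (∀ p, p ∈ S ↔ p.1 = r ∧ d ≤ p.2 ∧ p.2 < d + ℓ) ∧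
      (∀ y, d ≤ y → y < d + ℓ → μ.colLen y = r + 1) := by
  have hS' : IsRimHook ℓ μ.transpose (swapF S) := isRimHook_swap hS
  have hc : ∀ p ∈ swapF S, p.2 = r := fun p hp => hr p.swap (mem_swapF.mp hp)
  obtain ⟨d, h1, h2, h3⟩ := vstruct ℓ hℓ μ.transpose (swapF S) hS' r hc
  rw [colLen_transpose] at h1
  refine ⟨d, h1, ?_, ?_⟩
  · intro p
    have := h2 p.swap
    rw [show p.swap ∈ swapF S ↔ p ∈ S from by simp [mem_swapF]] at this
    simpa [Prod.swap] using this
  · intro y hy1 hy2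
    have := h3 y hy1 hy2
    rwa [rowLen_transpose] at this

lemma ell_not_dvd {ℓ k : ℕ} (h1 : 0 < k) (h2 : k < ℓ) : ¬ ℓ ∣ k := by
  intro h
  have := Nat.le_of_dvd h1 h
  omega

lemma case1 (ℓ : ℕ) (hℓ : 2 < ℓ) (mu mu' : YoungDiagram) (R S : Finset (ℕ × ℕ))
    (hR : IsRimHook ℓ mu R) (hmu' : mu'.cells = mu.cells \ R)
    (hS : IsRimHook ℓ mu' S) (hV : Vertical R) (hH : Horizontal S)
    (hadj : AdjSets R S) : ¬ IsJM ℓ mu := by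
  obtain ⟨c, hc⟩ := hV
  obtain ⟨r, hr⟩ := hH
  have hℓ0 : 0 < ℓ := by omega
  obtain ⟨a, hcol, hRmem, hrow⟩ := vstruct ℓ hℓ0 mu R hR c hc
  obtain ⟨d, hrowS, hSmem, hcolS⟩ := hstruct ℓ hℓ0 mu' S hS r hr
  have hmem' : ∀ p : ℕ × ℕ, p ∈ mu' ↔ p ∈ mu ∧ p ∉ R := by
    intro p; rw [← mem_cells, hmu', Finset.mem_sdiff, mem_cells]
  -- columns other than c agree between mu and mu'
  have hcolT : ∀ j, j ≠ c → mu'.colLen j = mu.colLen j := by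
    intro j hj
    apply colLen_eq_of
    intro i
    rw [hmem' (i, j)]
    constructor
    · exact fun h => h.1
    · intro h
      exact ⟨h, fun hmem => hj ((hRmem _).mp hmem).1⟩
  obtain ⟨u, huR, v, hvS, hAdj⟩ := hadj
  have huc : u.2 = c := hc u huR
  have hua : a ≤ u.1 ∧ u.1 < a + ℓ := by
    have := (hRmem u).mp huR; exact ⟨this.2.1, this.2.2⟩
  have hvr : v.1 = r := hr v hvS
  have hvd : d ≤ v.2 ∧ v.2 < d + ℓ := by
    have := (hSmem v).mp hvS; exact ⟨this.2.1, this.2.2⟩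
  have hvmu' : v ∈ mu' := by
    have := hS.1 hvS; rwa [mem_cells] at this
  intro hJM
  apply hJM
  rcases hAdj with ⟨h1, h2⟩ | ⟨h1, h2⟩
  · rcases h2 with h2 | h2
    · -- v = (u.1, c+1) ∈ mu', impossible since rowLen mu u.1 = c+1
      exfalso
      have hvmu : v ∈ mu := ((hmem' v).mp hvmu').1
      have : v.2 < mu.rowLen v.1 := by
        rw [mem_iff_lt_rowLen.symm]; exact (show (v.1, v.2) ∈ mu from hvmu)
      have hru : mu.rowLen u.1 = c + 1 := hrow u.1 hua.1 hua.2
      rw [← h1] at this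
      omega
    · -- Config A : v = (r, e) with e + 1 = c, r = u.1
      set e := v.2 with he
      have hec : e + 1 = c := by omega
      -- show r + 1 = a + ℓ
      obtain ⟨k, hk⟩ : ∃ k, a + ℓ = k + 1 := ⟨a + ℓ - 1, by omega⟩
      have hkc : (k, c) ∈ mu := mem_iff_lt_colLen.mpr (by omega)
      have hke : (k, e) ∈ mu := mu.up_left_mem le_rfl (by omega) hkc
      have hkeR : (k, e) ∉ R := fun hmem => by
        have := ((hRmem _).mp hmem).1; simp at this; omega
      have hkemu' : (k, e) ∈ mu' := (hmem' _).mpr ⟨hke, hkeR⟩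
      have hcle : mu'.colLen e = r + 1 := hcolS e hvd.1 hvd.2
      have hkr : k < r + 1 := by rw [← hcle]; exact mem_iff_lt_colLen.mp hkemu'
      have hra : r = k := by
        have : r < a + ℓ := by rw [← hvr, ← h1]; exact hua.2
        omega
      have hcolE : mu.colLen e = a + ℓ := by
        rw [← hcolT e (by omega), hcle]; omega
      -- witnesses (a, c), (a, e), (a+1, c)
      refine ⟨a, c, e, a + 1, ?_, ?_, ?_, ?_, ?_, ?_⟩
      · exact mem_iff_lt_colLen.mpr (by omega)
      · exact mem_iff_lt_colLen.mpr (by omega)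
      · exact mem_iff_lt_colLen.mpr (by omega)
      · have h1' : mu.rowLen a = c + 1 := hrow a le_rfl (by omega)
        unfold YoungDiagram.hook
        rw [h1', hcol]
        have : c + 1 - c + (a + ℓ - (a + 1)) = ℓ := by omega
        rw [this]
      · have h1' : mu.rowLen a = c + 1 := hrow a le_rfl (by omega)
        unfold YoungDiagram.hook
        rw [h1', hcolE]
        have : c + 1 - e + (a + ℓ - (a + 1)) = ℓ + 1 := by omega
        rw [this]
        intro hdvd
        have := (Nat.dvd_add_right (dvd_refl ℓ)).mp hdvd
        have := Nat.le_of_dvd (by omega) this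
        omega
      · have h1' : mu.rowLen (a+1) = c + 1 := hrow (a+1) (by omega) (by omega)
        unfold YoungDiagram.hook
        rw [h1', hcol]
        have : c + 1 - c + (a + ℓ - (a + 1 + 1)) = ℓ - 1 := by omega
        rw [this]
        exact ell_not_dvd (by omega) (by omega)
  · -- same column: u.2 = v.2 = c, v = (r, c) ∈ mu'
    have hvc : v.2 = c := by omega
    have hvmu : v ∈ mu := ((hmem' v).mp hvmu').1
    have hvnR : v ∉ R := ((hmem' v).mp hvmu').2
    have hrla : r < a := by
      have h3 : v.1 < mu.colLen c := by
        rw [← hvc, mem_iff_lt_colLen.symm]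
        exact (show (v.1, v.2) ∈ mu from hvmu)
      have h4 : ¬ (a ≤ v.1 ∧ v.1 < a + ℓ) := by
        intro hcon
        exact hvnR ((hRmem v).mpr ⟨hvc, hcon.1, hcon.2⟩)
      rw [hvr] at h3 h4
      omega
    rcases h2 with h2 | h2
    · -- u.1 + 1 = v.1 = r : impossible since r < a ≤ u.1
      exfalso; rw [hvr] at h2; omega
    · -- Config B : r + 1 = a
      have hra : a = r + 1 := by rw [hvr] at h2; omega
      -- d = c
      have hdc : d = c := by
        by_contra hne
        have hdlt : d < c := by have := hvd.1; rw [hvc] at this; omega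
        have h5 : mu'.colLen d = r + 1 := hcolS d le_rfl (by omega)
        have h6 : mu.colLen d = r + 1 := by rw [← hcolT d (by omega)]; exact h5
        have h7 : mu.colLen c ≤ mu.colLen d := mu.colLen_anti d c (by omega)
        omega
      -- rowLen of mu at row r agrees with mu'
      have hrT : mu.rowLen r = mu'.rowLen r := by
        apply rowLen_eq_of
        intro j
        rw [hmem' (r, j)]
        constructor
        · intro h
          refine ⟨h, fun hmem => ?_⟩
          have := ((hRmem _).mp hmem).2.1
          simp at this; omega
        · exact fun h => h.1
      have hrowR : mu.rowLen r = c + ℓ := by rw [hrT, hrowS, hdc]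
      have hcolC1 : mu.colLen (c+1) = r + 1 := by
        rw [← hcolT (c+1) (by omega)]
        exact hcolS (c+1) (by omega) (by omega)
      -- witnesses (r, c), (r, c+1), (a+1, c)
      refine ⟨r, c, c + 1, a + 1, ?_, ?_, ?_, ?_, ?_, ?_⟩
      · exact mem_iff_lt_colLen.mpr (by omega)
      · exact mem_iff_lt_rowLen.mpr (by omega)
      · exact mem_iff_lt_colLen.mpr (by omega)
      · unfold YoungDiagram.hook
        rw [hrowR, hcol]
        have : c + ℓ - c + (a + ℓ - (r + 1)) = 2 * ℓ := by omega
        rw [this]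
        exact dvd_mul_left ℓ 2
      · unfold YoungDiagram.hook
        rw [hrowR, hcolC1]
        have : c + ℓ - (c + 1) + (r + 1 - (r + 1)) = ℓ - 1 := by omega
        rw [this]
        exact ell_not_dvd (by omega) (by omega)
      · have h1' : mu.rowLen (a+1) = c + 1 := hrow (a+1) (by omega) (by omega)
        unfold YoungDiagram.hook
        rw [h1', hcol]
        have : c + 1 - c + (a + ℓ - (a + 1 + 1)) = ℓ - 1 := by omega
        rw [this]
        exact ell_not_dvd (by omega) (by omega)

lemma vertical_swapF {R : Finset (ℕ × ℕ)} (h : Horizontal R) : Vertical (swapF R) := by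
  obtain ⟨r, hr⟩ := h
  exact ⟨r, fun p hp => hr p.swap (mem_swapF.mp hp)⟩

lemma horizontal_swapF {R : Finset (ℕ × ℕ)} (h : Vertical R) : Horizontal (swapF R) := by
  obtain ⟨r, hr⟩ := h
  exact ⟨r, fun p hp => hr p.swap (mem_swapF.mp hp)⟩

lemma adjSets_swapF {R S : Finset (ℕ × ℕ)} (h : AdjSets R S) : AdjSets (swapF R) (swapF S) := by
  obtain ⟨u, hu, v, hv, hadj⟩ := h
  exact ⟨u.swap, mem_swapF.mpr (by simpa using hu), v.swap, mem_swapF.mpr (by simpa using hv),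
    cellAdj_swap hadj⟩

lemma cells_sdiff_swap {mu mu' : YoungDiagram} {R : Finset (ℕ × ℕ)}
    (h : mu'.cells = mu.cells \ R) :
    mu'.transpose.cells = mu.transpose.cells \ swapF R := by
  have hmem' : ∀ p : ℕ × ℕ, p ∈ mu' ↔ p ∈ mu ∧ p ∉ R := by
    intro p; rw [← mem_cells, h, Finset.mem_sdiff, mem_cells]
  ext p
  rw [mem_cells, mem_transpose, Finset.mem_sdiff, mem_cells, mem_transpose, mem_swapF, hmem']

end Aux

/-- If `μ` has a vertical (resp. horizontal) `ℓ`-rim hook `R` such that `μ∖R` has a horizontal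
(resp. vertical) `ℓ`-rim hook `S` adjacent to `R`, then `μ` is not an `(ℓ,0)`-JM partition. -/
theorem not_JM_of_adjacent_rim_hooks (ℓ : ℕ) (hℓ : 2 < ℓ) (mu mu' : YoungDiagram)
    (R S : Finset (ℕ × ℕ))
    (hR : IsRimHook ℓ mu R) (hmu' : mu'.cells = mu.cells \ R)
    (hS : IsRimHook ℓ mu' S)
    (hVH : (Vertical R ∧ Horizontal S) ∨ (Horizontal R ∧ Vertical S))
    (hadj : AdjSets R S) :
    ¬ IsJM ℓ mu := by
  rcases hVH with ⟨hV, hH⟩ | ⟨hH, hV⟩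
  · exact case1 ℓ hℓ mu mu' R S hR hmu' hS hV hH hadj
  · intro hJM
    exact case1 ℓ hℓ mu.transpose mu'.transpose (swapF R) (swapF S)
      (isRimHook_swap hR) (cells_sdiff_swap hmu') (isRimHook_swap hS)
      (vertical_swapF hH) (horizontal_swapF hV) (adjSets_swapF hadj)
      (isJM_transpose hJM)
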